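/- In the n-agent series component maintenance game with repair costs C_i = (1−p_i)·∏_{j≠i} p_j, the all-do-nothing profile 0^n and the all-repair profile 1^n are both pure Nash equilibria, and the Price of Anarchy is at least H̃/G̃^n, where H̃ is the harmonic mean and G̃ is the geometric mean of p_1,…,p_n. -/

import Mathlib

open Finset

/-- Probability the series system works under action profile `s`. -/
noncomputable def sysP {n : ℕ} (p : Fin n → ℝ) (s : Fin n → Bool) : ℝ :=
  ∏ i, (if s i then 1 else p i)

/-- Repair cost `C_i = (1 - p_i) ∏_{j ≠ i} p_j`. -/
noncomputable def Cser {n : ℕ} (p : Fin n → ℝ) (i : Fin n) : ℝ :=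
  (1 - p i) * ∏ j ∈ Finset.univ.erase i, p j

/-- Agent `i`'s expected cost in the `n`-agent series game. -/
noncomputable def costSer {n : ℕ} (p : Fin n → ℝ) (i : Fin n) (s : Fin n → Bool) : ℝ :=
  Cser p i * (if s i then 1 else 0) + 1 - sysP p s

/-- Social cost. -/
noncomputable def socialSer {n : ℕ} (p : Fin n → ℝ) (s : Fin n → Bool) : ℝ :=
  ∑ i, costSer p i s

/-- Pure Nash equilibrium (each agent has two actions, so it suffices to
compare with flipping one's own action). -/
def isNESer {n : ℕ} (p : Fin n → ℝ) (s : Fin n → Bool) : Prop :=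
  ∀ i, costSer p i s ≤ costSer p i (Function.update s i (!(s i)))

lemma aux_sysP_split {n : ℕ} (p : Fin n → ℝ) (s : Fin n → Bool) (i : Fin n) :
    sysP p s = (if s i then 1 else p i) * ∏ j ∈ Finset.univ.erase i, (if s j then 1 else p j) :=
  (Finset.mul_prod_erase _ _ (mem_univ i)).symm

/-- In the `n`-agent series game with `C_i = (1-p_i)∏_{j≠i} p_j`, the all-DN and
all-RE profiles are both pure Nash equilibria, and the Price of Anarchy `M/m` is
at least `H̃ / G̃^n`, where `H̃` is the harmonic mean and `G̃` the geometric mean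
of the `p_i`. -/
theorem stmt_3 (n : ℕ) (hn : 1 ≤ n) (p : Fin n → ℝ)
    (hp : ∀ i, 0 < p i) (hp' : ∀ i, p i < 1)
    (M m : ℝ)
    (hM : IsGreatest {c | ∃ s : Fin n → Bool, isNESer p s ∧ socialSer p s = c} M)
    (hm : IsLeast {c | ∃ s : Fin n → Bool, socialSer p s = c} m) :
    isNESer p (fun _ => false) ∧ isNESer p (fun _ => true) ∧
      ((n : ℝ) / ∑ i, (p i)⁻¹) / ((∏ i, p i) ^ ((n : ℝ)⁻¹)) ^ n ≤ M / m := by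
  have hPpos : (0:ℝ) < ∏ i, p i := Finset.prod_pos (fun i _ => hp i)
  set P : ℝ := ∏ i, p i with hPdef
  set Q : Fin n → ℝ := fun i => ∏ j ∈ Finset.univ.erase i, p j with hQdef
  have hQpos : ∀ i, 0 < Q i := fun i => Finset.prod_pos (fun j _ => hp j)
  have hQle : ∀ i, Q i ≤ 1 := fun i =>
    Finset.prod_le_one (fun j _ => (hp j).le) (fun j _ => (hp' j).le)
  have hPQ : ∀ i, p i * Q i = P := fun i => Finset.mul_prod_erase _ _ (mem_univ i)
  have i0 : Fin n := ⟨0, hn⟩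
  have hP1 : P < 1 := by
    have h1 := hPQ i0
    nlinarith [hQle i0, hQpos i0, hp i0, hp' i0]
  -- sysP values
  have hsysF : sysP p (fun _ => false) = P := by simp [sysP, hPdef]
  have hsysT : sysP p (fun _ => true) = 1 := by simp [sysP]
  -- sysP of flipped profiles
  have hsysFup : ∀ i, sysP p (Function.update (fun _ => false) i true) = Q i := by
    intro i
    rw [aux_sysP_split p _ i]
    simp only [Function.update_self, if_true]
    rw [one_mul]
    refine Finset.prod_congr rfl (fun j hj => ?_)
    simp [Function.update_of_ne (Finset.ne_of_mem_erase hj)]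
  have hsysTup : ∀ i, sysP p (Function.update (fun _ => true) i false) = p i := by
    intro i
    rw [aux_sysP_split p _ i]
    simp only [Function.update_self]
    rw [show (if (false:Bool) then (1:ℝ) else p i) = p i from rfl]
    have h1 : ∏ j ∈ Finset.univ.erase i,
        (if (Function.update (fun _ => true) i false j : Bool) then (1:ℝ) else p j) = 1 := by
      refine Finset.prod_eq_one (fun j hj => ?_)
      simp [Function.update_of_ne (Finset.ne_of_mem_erase hj)]
    rw [h1, mul_one]
  -- NE at all-false
  have hNEf : isNESer p (fun _ => false) := by
    intro i
    simp only [costSer, Bool.not_false, Function.update_self, if_true, if_false,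
      hsysF, hsysFup i]
    norm_num
    have h0 : Cser p i = (1 - p i) * Q i := rfl
    have h2 := hPQ i
    nlinarith
  -- NE at all-true
  have hNEt : isNESer p (fun _ => true) := by
    intro i
    simp only [costSer, Bool.not_true, Function.update_self, if_true, if_false,
      hsysT, hsysTup i]
    norm_num
    have h0 : Cser p i = (1 - p i) * Q i := rfl
    rw [h0]
    nlinarith [hQle i, hQpos i, hp i, hp' i]
  refine ⟨hNEf, hNEt, ?_⟩
  -- social costs
  have hCser : ∀ i, Cser p i = Q i - P := by
    intro i
    have h0 : Cser p i = (1 - p i) * Q i := rfl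
    rw [h0]; have := hPQ i; ring_nf; linarith
  have hsocF : socialSer p (fun _ => false) = n * (1 - P) := by
    simp [socialSer, costSer, hsysF, mul_comm]; ring
  have hsocT : socialSer p (fun _ => true) = (∑ i, Q i) - n * P := by
    have hco : ∀ i : Fin n, costSer p i (fun _ => true) = Q i - P := by
      intro i
      simp [costSer, hsysT, hCser i]
    rw [socialSer, Finset.sum_congr rfl (fun i _ => hco i), Finset.sum_sub_distrib,
      Finset.sum_const, card_univ, Fintype.card_fin, nsmul_eq_mul]
  set T : ℝ := ∑ i, Q i with hTdef
  set S : ℝ := ∑ i, (p i)⁻¹ with hSdef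
  have hSP : S * P = T := by
    rw [hSdef, Finset.sum_mul]
    refine Finset.sum_congr rfl (fun i _ => ?_)
    rw [← hPQ i, inv_mul_cancel_left₀ (hp i).ne']
  have hTn : T ≤ n := by
    calc T ≤ ∑ _i : Fin n, (1:ℝ) := Finset.sum_le_sum (fun i _ => hQle i)
    _ = n := by simp
  have hTpos : 0 < T := Finset.sum_pos (fun i _ => hQpos i) ⟨i0, mem_univ i0⟩
  have hSpos : 0 < S := by
    have h1 : 0 < S * P := hSP ▸ hTpos
    nlinarith [hPpos]
  -- m ≤ social(all-true), M ≥ social(all-false)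
  have hmle : m ≤ T - n * P := hsocT ▸ hm.2 ⟨fun _ => true, rfl⟩
  have hMge : (n:ℝ) * (1 - P) ≤ M := hsocF ▸ hM.2 ⟨fun _ => false, hNEf, rfl⟩
  -- m > 0
  have hmpos : 0 < m := by
    obtain ⟨s, hs⟩ := hm.1
    rw [← hs]
    by_cases hall : ∀ i, s i = true
    · have h1 : socialSer p s = ∑ i, Cser p i := by
        simp only [socialSer, costSer]
        refine Finset.sum_congr rfl (fun i _ => ?_)
        have hsys1 : sysP p s = 1 := by
          refine Finset.prod_eq_one (fun j _ => ?_)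
          rw [hall j]; rfl
        rw [hall i, hsys1]; simp
      rw [h1]
      refine Finset.sum_pos (fun i _ => ?_) ⟨i0, mem_univ i0⟩
      rw [hCser i, ← hPQ i]
      nlinarith [hQpos i, hp' i]
    · push_neg at hall
      obtain ⟨i, hi⟩ := hall
      replace hi : s i = false := by simpa using hi
      have hsyslt : sysP p s < 1 := by
        rw [aux_sysP_split p s i, hi, if_neg (by simp)]
        have hle1 : ∏ j ∈ Finset.univ.erase i, (if s j then (1:ℝ) else p j) ≤ 1 := by
          refine Finset.prod_le_one (fun j _ => ?_) (fun j _ => ?_) <;>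
            split <;> simp [(hp _).le, (hp' _).le]
        have hpos1 : (0:ℝ) < ∏ j ∈ Finset.univ.erase i, (if s j then (1:ℝ) else p j) := by
          refine Finset.prod_pos (fun j _ => ?_)
          split
          · exact one_pos
          · exact hp j
        nlinarith [hp i, hp' i]
      have hpos : ∀ k, 0 < costSer p k s := by
        intro k
        simp only [costSer]
        have hCk : 0 ≤ Cser p k * (if s k then (1:ℝ) else 0) := by
          have h2 : (0:ℝ) ≤ Cser p k := by
            rw [hCser k, ← hPQ k]
            nlinarith [hQpos k, hp' k, hp k]
          split <;> simp [h2]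
        linarith
      exact Finset.sum_pos (fun k _ => hpos k) ⟨i0, mem_univ i0⟩
  -- rewrite geometric mean power
  have hn0 : (0:ℝ) < n := by exact_mod_cast hn
  have hG : ((P) ^ ((n:ℝ)⁻¹)) ^ n = P := by
    rw [← Real.rpow_natCast (P ^ ((n:ℝ)⁻¹)) n, ← Real.rpow_mul hPpos.le,
      inv_mul_cancel₀ hn0.ne', Real.rpow_one]
  rw [hG, div_div, div_le_div_iff₀ (by positivity) hmpos]
  -- goal: n * m ≤ M * (S * P)
  calc (n:ℝ) * m ≤ n * (T - n * P) := by
        nlinarith [mul_le_mul_of_nonneg_left hmle hn0.le]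
    _ ≤ (n * (1 - P)) * T := by
        nlinarith [mul_le_mul_of_nonneg_left hTn (mul_pos hn0 hPpos).le]
    _ ≤ M * (S * P) := by
        rw [hSP]
        nlinarith [mul_le_mul_of_nonneg_right hMge hTpos.le]
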